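/- Let 𝔸 be a symmetric real 4×4 matrix. Then for every g ∈ SE(3) and every X ∈ se(3), tr(g X 𝔸 (g − I₄)ᵀ) = tr(ℙ((I₄ − g⁻¹) 𝔸)ᵀ X). (This identifies the differential of the function U(g) = ½ tr((I₄ − g)𝔸(I₄ − g)ᵀ) in the direction gX with the Frobenius inner product of ℙ((I₄ − g⁻¹)𝔸) and X.) -/

import Mathlib

open Matrix BigOperators

noncomputable section

abbrev V3 : Type := Fin 3 → ℝ
abbrev V4 : Type := (Fin 3 ⊕ Fin 1) → ℝ
abbrev V6 : Type := (Fin 3 → ℝ) × (Fin 3 → ℝ)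
abbrev M3 : Type := Matrix (Fin 3) (Fin 3) ℝ
abbrev M4 : Type := Matrix (Fin 3 ⊕ Fin 1) (Fin 3 ⊕ Fin 1) ℝ

/-- cross product on ℝ³ -/
def cross (x y : V3) : V3 := crossProduct x y

/-- skew-symmetric matrix `x^×` with `x^× y = x × y` -/
def skew (x : V3) : M3 := !![0, -x 2, x 1; x 2, 0, -x 0; -x 1, x 0, 0]

/-- rank-one matrix `x yᵀ` -/
def outer (x y : V3) : M3 := Matrix.vecMulVec x y

/-- `R` is a rotation matrix -/
def isRot (R : M3) : Prop := Rᵀ * R = 1 ∧ R.det = 1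

def colV (p : V3) : Matrix (Fin 3) (Fin 1) ℝ := Matrix.of fun i _ => p i
def rowV (p : V3) : Matrix (Fin 1) (Fin 3) ℝ := Matrix.of fun _ j => p j

/-- homogeneous matrix `[R, p; 0, 1]` -/
def SE3mat (R : M3) (p : V3) : M4 := Matrix.fromBlocks R (colV p) 0 1

/-- membership in SE(3) -/
def inSE3 (g : M4) : Prop := ∃ R p, isRot R ∧ g = SE3mat R p

/-- vector part of an element of ℝ⁴ -/
def vpart (r : V4) : V3 := fun i => r (Sum.inl i)
/-- scalar part of an element of ℝ⁴ -/
def spart (r : V4) : ℝ := r (Sum.inr 0)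

/-- wedge product `b ∧ r := (b_v × r_v, b_s r_v − r_s b_v) ∈ ℝ⁶` -/
def wedge (b r : V4) : V6 :=
  (cross (vpart b) (vpart r), spart b • vpart r - spart r • vpart b)

/-- `ψ_a(A) := ½(a₃₂ − a₂₃, a₁₃ − a₃₁, a₂₁ − a₁₂)` -/
def psia (A : M3) : V3 :=
  ![(A 2 1 - A 1 2) / 2, (A 0 2 - A 2 0) / 2, (A 1 0 - A 0 1) / 2]

/-- `ψ([A, b; c, d]) := (ψ_a(A), ½ b) ∈ ℝ⁶` -/
def psi (M : M4) : V6 :=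
  (psia M.toBlocks₁₁, fun i => M (Sum.inl i) (Sum.inr 0) / 2)

/-- `ℙ([A, b; c, d]) := [(A − Aᵀ)/2, b; 0, 0]` -/
def Pproj (M : M4) : M4 :=
  Matrix.fromBlocks ((1 / 2 : ℝ) • (M.toBlocks₁₁ - M.toBlocks₁₁ᵀ)) M.toBlocks₁₂ 0 0

/-- `Ad*_g = [Rᵀ, −Rᵀ p^×; 0, Rᵀ]` acting on ℝ⁶, for `g = [R, p; 0, 1]` -/
def AdStar (g : M4) (ξ : V6) : V6 :=
  ((g.toBlocks₁₁)ᵀ.mulVec (ξ.1 - cross (fun i => g (Sum.inl i) (Sum.inr 0)) ξ.2),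
   (g.toBlocks₁₁)ᵀ.mulVec ξ.2)

/-- `(ω, v)^∧ := [ω^×, v; 0, 0]` -/
def hat (ξ : V6) : M4 := Matrix.fromBlocks (skew ξ.1) (colV ξ.2) 0 0

/-- squared Euclidean norm on ℝ³ -/
def sq3 (x : V3) : ℝ := ∑ i, x i ^ 2
/-- squared Euclidean norm on ℝ⁴ -/
def sq4 (x : V4) : ℝ := ∑ i, x i ^ 2
/-- squared Euclidean norm on ℝ⁶ -/
def sq6 (ξ : V6) : ℝ := sq3 ξ.1 + sq3 ξ.2
/-- squared Frobenius norm of a 4×4 matrix -/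
def frob4 (M : M4) : ℝ := ∑ i, ∑ j, M i j ^ 2
/-- squared Frobenius norm of a 3×3 matrix -/
def frob3 (M : M3) : ℝ := ∑ i, ∑ j, M i j ^ 2

/-- membership in `𝓜₀` (last row zero, block form `[M₁, m₂; 0, 0]`) -/
def inM0 (M : M4) : Prop := ∃ (M₁ : M3) (m₂ : V3), M = Matrix.fromBlocks M₁ (colV m₂) 0 0

/-- `Δ_Q(u, v) := uᵀ((tr(Q) − 2 vᵀQv) I₃ − Q + 2 Q v vᵀ) u` -/
def DeltaQ (Q : M3) (u v : V3) : ℝ :=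
  u ⬝ᵥ Matrix.mulVec
    ((Q.trace - 2 * (v ⬝ᵥ Q.mulVec v)) • (1 : M3) - Q + (2 : ℝ) • (Q * outer v v)) u

/-- angle-axis rotation `R_a(θ, u) = I₃ + sin θ · u^× + (1 − cos θ)(u^×)²` -/
def Ra (θ : ℝ) (u : V3) : M3 :=
  1 + Real.sin θ • skew u + (1 - Real.cos θ) • (skew u * skew u)

lemma trace_fromBlocks' (A : M3) (B : Matrix (Fin 3) (Fin 1) ℝ)
    (C : Matrix (Fin 1) (Fin 3) ℝ) (D : Matrix (Fin 1) (Fin 1) ℝ) :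
    (Matrix.fromBlocks A B C D).trace = A.trace + D.trace := by
  simp [Matrix.trace, Matrix.fromBlocks, Fintype.sum_sum_type, Matrix.diag]

/-- `tr((ℙ M)ᵀ X) = tr(Mᵀ X)` for `X = [Ω, v; 0, 0]` with `Ω` skew. -/
lemma trace_Pproj (M : M4) (Ω : M3) (v : V3) (hΩ : Ωᵀ = -Ω) :
    ((Pproj M)ᵀ * Matrix.fromBlocks Ω (colV v) 0 0).trace
      = (Mᵀ * Matrix.fromBlocks Ω (colV v) 0 0).trace := by
  have hM : M = Matrix.fromBlocks M.toBlocks₁₁ M.toBlocks₁₂ M.toBlocks₂₁ M.toBlocks₂₂ :=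
    (Matrix.fromBlocks_toBlocks M).symm
  have key : ∀ (N₁ : M3) (N₂ : Matrix (Fin 3) (Fin 1) ℝ) (N₃ : Matrix (Fin 1) (Fin 3) ℝ)
      (N₄ : Matrix (Fin 1) (Fin 1) ℝ),
      ((Matrix.fromBlocks N₁ N₂ N₃ N₄)ᵀ * Matrix.fromBlocks Ω (colV v) 0 0).trace
        = (N₁ᵀ * Ω).trace + (N₂ᵀ * colV v).trace := by
    intro N₁ N₂ N₃ N₄
    rw [Matrix.fromBlocks_transpose, Matrix.fromBlocks_multiply, trace_fromBlocks']
    simp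
  conv_rhs => rw [hM]
  rw [key]
  unfold Pproj
  rw [key]
  have skewpair : (M.toBlocks₁₁ * Ω).trace = -(M.toBlocks₁₁ᵀ * Ω).trace := by
    have : (M.toBlocks₁₁ * Ω).trace = ((M.toBlocks₁₁ * Ω)ᵀ).trace :=
      (Matrix.trace_transpose _).symm
    rw [this, Matrix.transpose_mul, hΩ, Matrix.neg_mul, Matrix.trace_neg,
      Matrix.trace_mul_comm]
  rw [Matrix.transpose_smul, Matrix.transpose_sub, Matrix.transpose_transpose,
    Matrix.smul_mul, Matrix.sub_mul, Matrix.trace_smul, Matrix.trace_sub, skewpair,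
    smul_eq_mul]
  ring

theorem stmt8 (A : M4) (hsym : Aᵀ = A) :
    ∀ g : M4, inSE3 g → ∀ (Ω : M3) (v : V3), Ωᵀ = -Ω →
      (g * Matrix.fromBlocks Ω (colV v) 0 0 * A * (g - 1)ᵀ).trace
        = ((Pproj ((1 - g⁻¹) * A))ᵀ * Matrix.fromBlocks Ω (colV v) 0 0).trace := by
  rintro g ⟨R, p, ⟨hRtR, _⟩, rfl⟩ Ω v hΩ
  set X : M4 := Matrix.fromBlocks Ω (colV v) 0 0 with hX
  set P : Matrix (Fin 3) (Fin 1) ℝ := colV p with hP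
  -- the explicit inverse
  set h : M4 := Matrix.fromBlocks Rᵀ (-(Rᵀ * P)) 0 1 with hh
  have hRRt : R * Rᵀ = 1 := mul_eq_one_comm.mp hRtR
  have hgh : SE3mat R p * h = 1 := by
    rw [SE3mat, hh, Matrix.fromBlocks_multiply]
    simp [hRRt, ← Matrix.mul_assoc, ← Matrix.fromBlocks_one]
    simp [hP]
  have hinv : (SE3mat R p)⁻¹ = h := Matrix.inv_eq_right_inv hgh
  rw [hinv, trace_Pproj _ _ _ hΩ]
  -- reduce RHS: tr(((1-h)A)ᵀ X) = tr((1-h)ᵀ (X A))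
  have hsymstep : (((1 - h) * A)ᵀ * X).trace = ((1 - h)ᵀ * (X * A)).trace := by
    rw [Matrix.transpose_mul, hsym, Matrix.mul_assoc, Matrix.trace_mul_comm,
      Matrix.mul_assoc]
  -- reduce LHS: tr(g X A (g-1)ᵀ) = tr((g-1)ᵀ g (X A))
  have hlhs : (SE3mat R p * X * A * (SE3mat R p - 1)ᵀ).trace
      = ((SE3mat R p - 1)ᵀ * SE3mat R p * (X * A)).trace := by
    rw [Matrix.trace_mul_comm]
    simp only [Matrix.mul_assoc]
  rw [hlhs, hsymstep]
  -- the difference D satisfies D * X = 0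
  have hD : ((SE3mat R p - 1)ᵀ * SE3mat R p - (1 - h)ᵀ) * X = 0 := by
    have h1 : (1 : M4) = Matrix.fromBlocks (1 : M3) 0 0 (1 : Matrix (Fin 1) (Fin 1) ℝ) :=
      Matrix.fromBlocks_one.symm
    rw [hh, SE3mat, hX, hP, h1]
    simp only [Matrix.transpose_sub, Matrix.fromBlocks_transpose,
      Matrix.sub_mul, Matrix.fromBlocks_multiply, Matrix.transpose_neg, Matrix.transpose_mul,
      Matrix.transpose_transpose, Matrix.transpose_zero, Matrix.transpose_one]
    simp [hRtR]
    ext i j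
    rcases i with i | i <;> rcases j with j | j <;>
      simp [Matrix.fromBlocks]
  have key : (SE3mat R p - 1)ᵀ * SE3mat R p * (X * A) = (1 - h)ᵀ * (X * A) := by
    rw [← sub_eq_zero, ← Matrix.sub_mul, ← Matrix.mul_assoc, hD, Matrix.zero_mul]
  rw [key]
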